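/- Let G be a k-uniform hypergraph with n vertices and m edges, and let E(G) = ∑_{i=1}^{n} |λ_i| be its energy. Then the Estrada index satisfies EE(G) ≤ n + E(G) − 1 − √((k−1)m(m(k−2)+2)) + e^{√((k−1)m(m(k−2)+2))}, and equality holds if and only if G has no edges (G is the edgeless hypergraph on n vertices). -/

import Mathlib

open scoped BigOperators
open scoped Nat

set_option linter.unusedSectionVars false

section Hyper

variable {V : Type*} [Fintype V] [DecidableEq V]

/-- The adjacency matrix of a hypergraph given by its edge set `E`:
the `(i,j)` entry, for `i ≠ j`, is the number of edges containing both `i` and `j`,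
and the diagonal entries are `0`. -/
def adjMatrix (E : Finset (Finset V)) : Matrix V V ℝ :=
  fun i j => if i = j then 0 else ((E.filter fun e => i ∈ e ∧ j ∈ e).card : ℝ)

theorem adjMatrix_isHermitian (E : Finset (Finset V)) :
    (adjMatrix E).IsHermitian := by
  unfold Matrix.IsHermitian
  ext i j
  simp only [Matrix.conjTranspose_apply, adjMatrix, star_trivial]
  rcases eq_or_ne i j with h | h
  · simp [h]
  · have hfilter : E.filter (fun e => j ∈ e ∧ i ∈ e) = E.filter (fun e => i ∈ e ∧ j ∈ e) :=
      Finset.filter_congr fun e _ => and_comm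
    rw [if_neg (Ne.symm h), if_neg h, hfilter]

/-- The Estrada index of a hypergraph: `EE(G) = ∑ᵢ exp (λᵢ)`, the sum over the
eigenvalues (with multiplicity) of the adjacency matrix; equivalently `tr (exp A(G))`. -/
noncomputable def estradaIndex (E : Finset (Finset V)) : ℝ :=
  ∑ i, Real.exp ((adjMatrix_isHermitian E).eigenvalues i)

/-- The energy of a hypergraph: `∑ᵢ |λᵢ|` over the adjacency eigenvalues. -/
noncomputable def energy (E : Finset (Finset V)) : ℝ :=
  ∑ i, |(adjMatrix_isHermitian E).eigenvalues i|

/-- The degree of a vertex: the number of edges containing it. -/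
def degree (E : Finset (Finset V)) (v : V) : ℕ := (E.filter fun e => v ∈ e).card

end Hyper

/- ### Auxiliary lemmas -/

/-- Monotonicity of `(e^x - 1 - x)/x²`, in multiplied-out form. -/
lemma aux_ratio_lemma {x s : ℝ} (hx : 0 ≤ x) (hxs : x ≤ s) :
    (Real.exp x - 1 - x) * s ^ 2 ≤ (Real.exp s - 1 - s) * x ^ 2 := by
  have exp_sub_tsum : ∀ t : ℝ, Real.exp t - 1 - t = ∑' n : ℕ, t ^ (n + 2) / (n + 2)! := by
    intro t
    have h := Summable.sum_add_tsum_nat_add 2 (Real.summable_pow_div_factorial t)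
    rw [Real.exp_eq_exp_ℝ, NormedSpace.exp_eq_tsum_div]
    simp [Finset.sum_range_succ] at h
    linarith
  have hsum : ∀ t : ℝ, Summable (fun n : ℕ => t ^ (n + 2) / (n + 2)!) := fun t =>
    (summable_nat_add_iff 2).2 (Real.summable_pow_div_factorial t)
  rw [exp_sub_tsum x, exp_sub_tsum s, ← tsum_mul_right, ← tsum_mul_right]
  refine Summable.tsum_le_tsum (fun n => ?_) ((hsum x).mul_right _) ((hsum s).mul_right _)
  rw [div_mul_eq_mul_div, div_mul_eq_mul_div]
  refine div_le_div_of_nonneg_right ?_ (by positivity)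
  calc x ^ (n + 2) * s ^ 2 = x ^ n * (x ^ 2 * s ^ 2) := by ring
    _ ≤ s ^ n * (x ^ 2 * s ^ 2) :=
        mul_le_mul_of_nonneg_right (pow_le_pow_left₀ hx hxs n) (by positivity)
    _ = s ^ (n + 2) * x ^ 2 := by ring

/-- The trace of a real hermitian matrix is the sum of its eigenvalues. -/
lemma aux_herm_trace {N : Type*} [Fintype N] [DecidableEq N] {A : Matrix N N ℝ}
    (hA : A.IsHermitian) : A.trace = ∑ i, hA.eigenvalues i := by
  conv_lhs => rw [hA.spectral_theorem, Unitary.conjStarAlgAut_apply]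
  rw [Matrix.trace_mul_cycle]
  rw [show star (hA.eigenvectorUnitary : Matrix N N ℝ) * (hA.eigenvectorUnitary : Matrix N N ℝ)
      = 1 from Matrix.mem_unitaryGroup_iff'.mp hA.eigenvectorUnitary.2, one_mul,
    Matrix.trace_diagonal]
  simp [RCLike.ofReal]

/-- The trace of the square of a real hermitian matrix is the sum of squared eigenvalues. -/
lemma aux_herm_trace_sq {N : Type*} [Fintype N] [DecidableEq N] {A : Matrix N N ℝ}
    (hA : A.IsHermitian) : (A * A).trace = ∑ i, hA.eigenvalues i ^ 2 := by
  set U : Matrix N N ℝ := (hA.eigenvectorUnitary : Matrix N N ℝ) with hUdef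
  set D : Matrix N N ℝ := Matrix.diagonal (RCLike.ofReal ∘ hA.eigenvalues) with hDdef
  have h1 : star U * U = 1 := Matrix.mem_unitaryGroup_iff'.mp hA.eigenvectorUnitary.2
  have h2 : A * A = U * (D * D) * star U := by
    conv_lhs => rw [hA.spectral_theorem]
    calc (U * D * star U) * (U * D * star U) = U * D * (star U * U) * (D * star U) := by
          noncomm_ring
      _ = U * (D * D) * star U := by rw [h1]; noncomm_ring
  rw [h2, Matrix.trace_mul_cycle, h1, one_mul, hDdef, Matrix.diagonal_mul_diagonal,
    Matrix.trace_diagonal]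
  simp [RCLike.ofReal, sq]

lemma aux_adj_trace {V : Type*} [Fintype V] [DecidableEq V] (E : Finset (Finset V)) :
    (adjMatrix E).trace = 0 := by
  simp [Matrix.trace, Matrix.diag, adjMatrix]

lemma aux_adj_trace_sq {V : Type*} [Fintype V] [DecidableEq V] (E : Finset (Finset V)) :
    (adjMatrix E * adjMatrix E).trace = ∑ e ∈ E, ∑ f ∈ E, ((e ∩ f).offDiag.card : ℝ) := by
  have step1 : (adjMatrix E * adjMatrix E).trace
      = ∑ p ∈ (Finset.univ : Finset V).offDiag,
          ((E.filter fun e => p.1 ∈ e ∧ p.2 ∈ e).card : ℝ) ^ 2 := by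
    rw [Matrix.trace]
    simp only [Matrix.diag, Matrix.mul_apply]
    have : ∀ i j : V, adjMatrix E i j * adjMatrix E j i
        = if i ≠ j then ((E.filter fun e => i ∈ e ∧ j ∈ e).card : ℝ) ^ 2 else 0 := by
      intro i j
      rcases eq_or_ne i j with h | h
      · simp [h, adjMatrix]
      · have hf : E.filter (fun e => j ∈ e ∧ i ∈ e) = E.filter (fun e => i ∈ e ∧ j ∈ e) :=
          Finset.filter_congr fun e _ => and_comm
        simp [adjMatrix, h, h.symm, hf, sq]
    simp only [this]
    rw [← Finset.sum_product', ← Finset.sum_filter]; congr 1; ext p; simp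
  rw [step1]
  have hcard : ∀ p : V × V, ((E.filter fun e => p.1 ∈ e ∧ p.2 ∈ e).card : ℝ)
      = ∑ e ∈ E, if p.1 ∈ e ∧ p.2 ∈ e then (1 : ℝ) else 0 := by
    intro p
    rw [Finset.card_filter]
    push_cast
    rfl
  calc ∑ p ∈ (Finset.univ : Finset V).offDiag,
        ((E.filter fun e => p.1 ∈ e ∧ p.2 ∈ e).card : ℝ) ^ 2
      = ∑ p ∈ (Finset.univ : Finset V).offDiag, ∑ e ∈ E, ∑ f ∈ E,
          (if p.1 ∈ e ∧ p.2 ∈ e then (1 : ℝ) else 0) *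
          (if p.1 ∈ f ∧ p.2 ∈ f then (1 : ℝ) else 0) := by
        refine Finset.sum_congr rfl fun p _ => ?_
        rw [sq, hcard, Finset.sum_mul_sum]
    _ = ∑ e ∈ E, ∑ f ∈ E, ∑ p ∈ (Finset.univ : Finset V).offDiag,
          (if p.1 ∈ e ∧ p.2 ∈ e then (1 : ℝ) else 0) *
          (if p.1 ∈ f ∧ p.2 ∈ f then (1 : ℝ) else 0) := by
        rw [Finset.sum_comm]
        exact Finset.sum_congr rfl fun e _ => Finset.sum_comm
    _ = ∑ e ∈ E, ∑ f ∈ E, ((e ∩ f).offDiag.card : ℝ) := by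
        refine Finset.sum_congr rfl fun e _ => Finset.sum_congr rfl fun f _ => ?_
        have h1 : ∀ p : V × V, (if p.1 ∈ e ∧ p.2 ∈ e then (1 : ℝ) else 0) *
            (if p.1 ∈ f ∧ p.2 ∈ f then (1 : ℝ) else 0)
            = if (p.1 ∈ e ∧ p.2 ∈ e) ∧ (p.1 ∈ f ∧ p.2 ∈ f) then (1 : ℝ) else 0 := by
          intro p
          by_cases h : p.1 ∈ e ∧ p.2 ∈ e <;> by_cases h' : p.1 ∈ f ∧ p.2 ∈ f <;>
            simp [h, h']
        have h2 : ((Finset.univ : Finset V).offDiag.filter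
            fun p : V × V => (p.1 ∈ e ∧ p.2 ∈ e) ∧ (p.1 ∈ f ∧ p.2 ∈ f)) = (e ∩ f).offDiag := by
          ext ⟨a, b⟩
          simp only [Finset.mem_filter, Finset.mem_offDiag, Finset.mem_univ, Finset.mem_inter,
            true_and]
          tauto
        simp only [h1, Finset.sum_boole, h2]

lemma aux_card_sum_bound {V : Type*} [Fintype V] [DecidableEq V] {k : ℕ} (hk : 2 ≤ k)
    (E : Finset (Finset V)) (hunif : ∀ e ∈ E, e.card = k) :
    ∑ e ∈ E, ∑ f ∈ E, ((e ∩ f).offDiag.card : ℝ)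
      ≤ ((k : ℝ) - 1) * (E.card : ℝ) * ((E.card : ℝ) * ((k : ℝ) - 2) + 2) := by
  set m : ℕ := E.card with hm
  have hk1 : (2 : ℝ) ≤ (k : ℝ) := by exact_mod_cast hk
  have hdiag : ∀ e ∈ E, ((e ∩ e).offDiag.card : ℝ) = (k : ℝ) * (k : ℝ) - (k : ℝ) := by
    intro e he
    rw [Finset.inter_self, Finset.offDiag_card, hunif e he]
    have : k ≤ k * k := Nat.le_mul_of_pos_left k (by omega)
    push_cast [this]
    ring
  have hoff : ∀ e ∈ E, ∀ f ∈ E, e ≠ f →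
      ((e ∩ f).offDiag.card : ℝ) ≤ ((k : ℝ) - 1) * ((k : ℝ) - 2) := by
    intro e he f hf hef
    set c : ℕ := (e ∩ f).card with hc
    have hck : c ≤ k - 1 := by
      have h1 : c ≤ k := by
        rw [← hunif e he]; exact Finset.card_le_card Finset.inter_subset_left
      rcases Nat.lt_or_ge c k with h | h
      · omega
      · exfalso
        have hek : (e ∩ f) = e := Finset.eq_of_subset_of_card_le Finset.inter_subset_left
          (by rw [hunif e he]; omega)
        have hef' : e ⊆ f := by rw [← hek]; exact Finset.inter_subset_right
        exact hef (Finset.eq_of_subset_of_card_le hef'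
          (by rw [hunif e he, hunif f hf]))
    have hcc : c ≤ c * c := by nlinarith
    have hcast : ((e ∩ f).offDiag.card : ℝ) = (c : ℝ) * c - c := by
      rw [Finset.offDiag_card, ← hc]
      push_cast [hcc]
      ring
    rw [hcast]
    have hcr : (c : ℝ) ≤ (k : ℝ) - 1 := by
      have h1 : (c : ℝ) ≤ ((k - 1 : ℕ) : ℝ) := by exact_mod_cast hck
      have h2 : ((k - 1 : ℕ) : ℝ) = (k : ℝ) - 1 := by
        have : 1 ≤ k := by omega
        push_cast [this]; ring
      linarith [h1, h2.le]
    have hc0 : (0 : ℝ) ≤ (c : ℝ) := by positivity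
    rcases Nat.eq_zero_or_pos c with h0 | h1
    · rw [h0]; push_cast; nlinarith
    · have : (1 : ℝ) ≤ (c : ℝ) := by exact_mod_cast h1
      nlinarith
  have key : ∀ e ∈ E, ∑ f ∈ E, ((e ∩ f).offDiag.card : ℝ)
      ≤ ((k : ℝ) * k - k) + ((m : ℝ) - 1) * (((k : ℝ) - 1) * ((k : ℝ) - 2)) := by
    intro e he
    rw [← Finset.add_sum_erase _ _ he]
    have h1 : ∑ f ∈ E.erase e, ((e ∩ f).offDiag.card : ℝ)
        ≤ ((E.erase e).card : ℝ) * (((k : ℝ) - 1) * ((k : ℝ) - 2)) := by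
      rw [← nsmul_eq_mul]
      refine Finset.sum_le_card_nsmul _ _ _ fun f hf => ?_
      exact hoff e he f (Finset.mem_of_mem_erase hf) (Ne.symm (Finset.ne_of_mem_erase hf))
    have h2 : ((E.erase e).card : ℝ) ≤ (m : ℝ) - 1 := by
      rw [Finset.card_erase_of_mem he]
      have hm1 : 1 ≤ m := Finset.card_pos.mpr ⟨e, he⟩
      push_cast [hm ▸ hm1]
      linarith
    have h3 : (0 : ℝ) ≤ ((k : ℝ) - 1) * ((k : ℝ) - 2) := by nlinarith
    have hmono := mul_le_mul_of_nonneg_right h2 h3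
    calc ((e ∩ e).offDiag.card : ℝ) + ∑ f ∈ E.erase e, ((e ∩ f).offDiag.card : ℝ)
        ≤ ((k : ℝ) * k - k) + ((E.erase e).card : ℝ) * (((k : ℝ) - 1) * ((k : ℝ) - 2)) := by
          rw [hdiag e he]; linarith
      _ ≤ ((k : ℝ) * k - k) + ((m : ℝ) - 1) * (((k : ℝ) - 1) * ((k : ℝ) - 2)) := by linarith
  calc ∑ e ∈ E, ∑ f ∈ E, ((e ∩ f).offDiag.card : ℝ)
      ≤ ∑ _e ∈ E, (((k : ℝ) * k - k) + ((m : ℝ) - 1) * (((k : ℝ) - 1) * ((k : ℝ) - 2))) :=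
        Finset.sum_le_sum key
    _ = (m : ℝ) * (((k : ℝ) * k - k) + ((m : ℝ) - 1) * (((k : ℝ) - 1) * ((k : ℝ) - 2))) := by
        rw [Finset.sum_const, nsmul_eq_mul]
    _ = ((k : ℝ) - 1) * (m : ℝ) * ((m : ℝ) * ((k : ℝ) - 2) + 2) := by ring

/-- For a `k`-uniform hypergraph `G` with `n` vertices, `m` edges and energy `E(G)`,
`EE(G) ≤ n + E(G) - 1 - √((k-1)m(m(k-2)+2)) + e^{√((k-1)m(m(k-2)+2))}`,
with equality iff `G` is edgeless. -/
theorem stmt_7 (n k : ℕ) (hk : 2 ≤ k)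
    (E : Finset (Finset (Fin n))) (hunif : ∀ e ∈ E, e.card = k) :
    estradaIndex E ≤ (n : ℝ) + energy E - 1 -
        Real.sqrt (((k : ℝ) - 1) * (E.card : ℝ) * ((E.card : ℝ) * ((k : ℝ) - 2) + 2)) +
        Real.exp (Real.sqrt (((k : ℝ) - 1) * (E.card : ℝ) * ((E.card : ℝ) * ((k : ℝ) - 2) + 2))) ∧
      (estradaIndex E = (n : ℝ) + energy E - 1 -
          Real.sqrt (((k : ℝ) - 1) * (E.card : ℝ) * ((E.card : ℝ) * ((k : ℝ) - 2) + 2)) +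
          Real.exp (Real.sqrt (((k : ℝ) - 1) * (E.card : ℝ) * ((E.card : ℝ) * ((k : ℝ) - 2) + 2)))
        ↔ E = ∅) := by
  classical
  set μ : Fin n → ℝ := (adjMatrix_isHermitian E).eigenvalues with hμ
  have hk2 : (2 : ℝ) ≤ (k : ℝ) := by exact_mod_cast hk
  have hEE : estradaIndex E = ∑ i, Real.exp (μ i) := rfl
  have henergy : energy E = ∑ i, |μ i| := rfl
  have hsum_sq : ∑ i, μ i ^ 2 = ∑ e ∈ E, ∑ f ∈ E, ((e ∩ f).offDiag.card : ℝ) := by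
    rw [← aux_herm_trace_sq (adjMatrix_isHermitian E), aux_adj_trace_sq]
  have htrace0 : ∑ i, μ i = 0 := by
    rw [← aux_herm_trace (adjMatrix_isHermitian E), aux_adj_trace]
  rcases eq_or_ne E ∅ with hE | hE
  · -- edgeless case: equality
    have hz : ∀ i, μ i = 0 := by
      have h0 : ∑ i, μ i ^ 2 = 0 := by rw [hsum_sq, hE]; simp
      intro i
      have h1 := (Finset.sum_eq_zero_iff_of_nonneg
        (fun i _ => sq_nonneg (μ i))).1 h0 i (Finset.mem_univ i)
      exact pow_eq_zero_iff (two_ne_zero) |>.mp h1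
    have hcard : (E.card : ℝ) = 0 := by rw [hE]; simp
    have hTo : ((k : ℝ) - 1) * (E.card : ℝ) * ((E.card : ℝ) * ((k : ℝ) - 2) + 2) = 0 := by
      rw [hcard]; ring
    have hEEn : estradaIndex E = (n : ℝ) := by
      rw [hEE]
      simp [hz]
    have henergy0 : energy E = 0 := by
      rw [henergy]
      simp [hz]
    rw [hEEn, henergy0, hTo, Real.sqrt_zero, Real.exp_zero]
    constructor
    · linarith
    · constructor
      · intro _; exact hE
      · intro _; ring
  · -- nonempty case: strict inequality
    have hEne : E.Nonempty := Finset.nonempty_iff_ne_empty.2 hE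
    have hm1 : (1 : ℝ) ≤ (E.card : ℝ) := by
      exact_mod_cast Finset.card_pos.mpr hEne
    set T : ℝ := ((k : ℝ) - 1) * (E.card : ℝ) * ((E.card : ℝ) * ((k : ℝ) - 2) + 2) with hT
    set S : ℝ := Real.sqrt T with hS
    have hTpos : 0 < T := by
      rw [hT]
      have h1 : (0 : ℝ) < (k : ℝ) - 1 := by linarith
      have h2 : (0 : ℝ) < (E.card : ℝ) := by linarith
      have h3 : (0 : ℝ) < (E.card : ℝ) * ((k : ℝ) - 2) + 2 := by nlinarith
      exact mul_pos (mul_pos h1 h2) h3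
    have hS2 : S ^ 2 = T := Real.sq_sqrt hTpos.le
    have hSpos : 0 < S := Real.sqrt_pos.2 hTpos
    have hsum_le : ∑ i, μ i ^ 2 ≤ T := by
      rw [hsum_sq, hT]
      exact aux_card_sum_bound hk E hunif
    have habs : ∀ i, |μ i| ≤ S := by
      intro i
      have h1 : μ i ^ 2 ≤ ∑ j, μ j ^ 2 :=
        Finset.single_le_sum (fun j _ => sq_nonneg (μ j)) (Finset.mem_univ i)
      have h2 : μ i ^ 2 ≤ S ^ 2 := by rw [hS2]; linarith
      calc |μ i| = Real.sqrt (μ i ^ 2) := (Real.sqrt_sq_eq_abs _).symm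
        _ ≤ Real.sqrt (S ^ 2) := Real.sqrt_le_sqrt h2
        _ = S := Real.sqrt_sq hSpos.le
    -- positivity of sum of squares
    have hpos_sq : 0 < ∑ i, μ i ^ 2 := by
      rw [hsum_sq]
      obtain ⟨e, he⟩ := hEne
      have hepos : (0 : ℝ) < ((e ∩ e).offDiag.card : ℝ) := by
        rw [Finset.inter_self]
        have hlt : k < k * k := by nlinarith
        have : 0 < e.offDiag.card := by
          rw [Finset.offDiag_card, hunif e he]; omega
        exact_mod_cast this
      have hinner : ∀ x ∈ E, (0 : ℝ) ≤ ∑ f ∈ E, ((x ∩ f).offDiag.card : ℝ) :=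
        fun x _ => Finset.sum_nonneg fun f _ => by positivity
      have hinner_pos : (0 : ℝ) < ∑ f ∈ E, ((e ∩ f).offDiag.card : ℝ) := by
        have := Finset.single_le_sum (f := fun f => ((e ∩ f).offDiag.card : ℝ))
          (fun f _ => by positivity) he
        linarith
      have := Finset.single_le_sum (f := fun x => ∑ f ∈ E, ((x ∩ f).offDiag.card : ℝ))
        hinner he
      linarith
    -- existence of a negative eigenvalue
    have hneg : ∃ j : Fin n, μ j < 0 := by
      by_contra h
      push_neg at h
      have hall : ∀ i ∈ Finset.univ, μ i = 0 :=
        (Finset.sum_eq_zero_iff_of_nonneg (fun i _ => h i)).1 htrace0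
      have : ∑ i, μ i ^ 2 = 0 :=
        Finset.sum_eq_zero fun i _ => by rw [hall i (Finset.mem_univ i)]; ring
      linarith
    obtain ⟨j, hj⟩ := hneg
    have hstrict : ∑ i, Real.exp (μ i) < ∑ i, Real.exp |μ i| := by
      refine Finset.sum_lt_sum (fun i _ => Real.exp_le_exp.2 (le_abs_self _))
        ⟨j, Finset.mem_univ j, Real.exp_lt_exp.2 ?_⟩
      calc μ j < 0 := hj
        _ ≤ |μ j| := abs_nonneg _
    have hsplit : ∑ i, Real.exp |μ i|
        = (n : ℝ) + (∑ i, |μ i|) + ∑ i, (Real.exp |μ i| - 1 - |μ i|) := by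
      have h1 : ∀ i ∈ Finset.univ, Real.exp |μ i|
          = 1 + (|μ i| + (Real.exp |μ i| - 1 - |μ i|)) := fun i _ => by ring
      rw [Finset.sum_congr rfl h1, Finset.sum_add_distrib, Finset.sum_add_distrib,
        Finset.sum_const, Finset.card_univ, Fintype.card_fin, nsmul_eq_mul, mul_one]
      ring
    have hhsum : ∑ i, (Real.exp |μ i| - 1 - |μ i|) ≤ Real.exp S - 1 - S := by
      have h1 : ∀ i : Fin n, (Real.exp |μ i| - 1 - |μ i|) * S ^ 2
          ≤ (Real.exp S - 1 - S) * μ i ^ 2 := by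
        intro i
        have := aux_ratio_lemma (abs_nonneg (μ i)) (habs i)
        rwa [sq_abs] at this
      have h2 : (∑ i, (Real.exp |μ i| - 1 - |μ i|)) * S ^ 2
          ≤ (Real.exp S - 1 - S) * ∑ i, μ i ^ 2 := by
        rw [Finset.sum_mul, Finset.mul_sum]
        exact Finset.sum_le_sum fun i _ => h1 i
      have hh0 : (0 : ℝ) ≤ Real.exp S - 1 - S := by
        have := Real.add_one_le_exp S
        linarith
      have h3 : (Real.exp S - 1 - S) * (∑ i, μ i ^ 2) ≤ (Real.exp S - 1 - S) * S ^ 2 := by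
        apply mul_le_mul_of_nonneg_left _ hh0
        rw [hS2]; exact hsum_le
      have h4 := h2.trans h3
      have hS2pos : (0 : ℝ) < S ^ 2 := by positivity
      calc ∑ i, (Real.exp |μ i| - 1 - |μ i|)
          = (∑ i, (Real.exp |μ i| - 1 - |μ i|)) * S ^ 2 / S ^ 2 := by
            field_simp
        _ ≤ (Real.exp S - 1 - S) * S ^ 2 / S ^ 2 := by
            apply div_le_div_of_nonneg_right h4 hS2pos.le
        _ = Real.exp S - 1 - S := by field_simp
    have hlt : estradaIndex E < (n : ℝ) + energy E - 1 - S + Real.exp S := by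
      rw [hEE, henergy]
      calc ∑ i, Real.exp (μ i) < ∑ i, Real.exp |μ i| := hstrict
        _ = (n : ℝ) + (∑ i, |μ i|) + ∑ i, (Real.exp |μ i| - 1 - |μ i|) := hsplit
        _ ≤ (n : ℝ) + (∑ i, |μ i|) + (Real.exp S - 1 - S) := by linarith
        _ = (n : ℝ) + (∑ i, |μ i|) - 1 - S + Real.exp S := by ring
    exact ⟨hlt.le, ⟨fun h => absurd h hlt.ne, fun h => absurd h hE⟩⟩
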